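/- In a weighted tree with a designated subset S of 'request' nodes and two nodes u, v ∈ S: the minimum length of a walk from u to v visiting all nodes of S equals 2·W − d(u,v), where W is the total edge weight of the minimal (Steiner) subtree of the tree spanning S ∪ {u, v}, and d(u,v) is the tree distance from u to v. -/

import Mathlib

open scoped Classical

namespace Steiner7
open SimpleGraph

variable {V : Type*} {G : SimpleGraph V}


lemma reach_or_aux {x y : V} : ∀ {z c : V} (_p : G.Walk z c),
    ((G.deleteEdges {s(x,y)}).Reachable c x ∨ (G.deleteEdges {s(x,y)}).Reachable c y) →
    ((G.deleteEdges {s(x,y)}).Reachable z x ∨ (G.deleteEdges {s(x,y)}).Reachable z y) := by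
  intro z c p
  induction p with
  | nil => exact id
  | @cons a d _ h q ih =>
    intro hc
    by_cases he : s(a, d) = s(x, y)
    · rw [Sym2.eq_iff] at he
      rcases he with ⟨rfl, rfl⟩ | ⟨rfl, rfl⟩
      · exact Or.inl (Reachable.refl _)
      · exact Or.inr (Reachable.refl _)
    · have hadj : (G.deleteEdges {s(x,y)}).Adj a d := by
        simp only [deleteEdges_adj, Set.mem_singleton_iff]
        exact ⟨h, he⟩
      exact (ih hc).imp (fun hr => hadj.reachable.trans hr) (fun hr => hadj.reachable.trans hr)

/-- After deleting one edge, every vertex reaches one of its endpoints. -/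
lemma reach_or (hG : G.Connected) (x y z : V) :
    (G.deleteEdges {s(x,y)}).Reachable z x ∨ (G.deleteEdges {s(x,y)}).Reachable z y := by
  obtain ⟨p⟩ := hG z x
  exact reach_or_aux p (Or.inl (Reachable.refl _))

/-- An edge lies on the (unique) path between `a` and `b` iff it separates them. -/
lemma mem_path_edges_iff (hG : G.Connected) (hT : G.IsAcyclic) {a b : V}
    (p : G.Walk a b) (hp : p.IsPath) {e : Sym2 V} (he : e ∈ G.edgeSet) :
    e ∈ p.edges ↔ ¬ (G.deleteEdges {e}).Reachable a b := by
  constructor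
  · rintro hmem ⟨q⟩
    let q' : G.Walk a b := q.map (Hom.ofLE (G.deleteEdges_le {e}))
    have hq' : e ∉ q'.edges := by
      simp_rw [q', Walk.edges_map, List.mem_map, Hom.ofLE_apply,
        Sym2.map_id', id]
      rintro ⟨e', h', rfl⟩
      have h2 := q.edges_subset_edgeSet h'
      simp only [deleteEdges, edgeSet_sdiff, edgeSet_fromEdgeSet,
        edgeSet_sdiff_sdiff_isDiag, Set.mem_diff, Set.mem_singleton_iff] at h2
      exact h2.2 trivial
    have huniq := hT.path_unique ⟨p, hp⟩ q'.toPath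
    apply hq'
    apply Walk.edges_toPath_subset
    have hpq : p = (q'.toPath : G.Walk a b) := congrArg Subtype.val huniq
    rwa [← hpq]
  · intro hn
    by_contra hne
    refine hn ⟨p.transfer _ fun e' ep => ?_⟩
    simp only [deleteEdges, edgeSet_sdiff, edgeSet_fromEdgeSet,
      edgeSet_sdiff_sdiff_isDiag, Set.mem_diff, Set.mem_singleton_iff]
    exact ⟨p.edges_subset_edgeSet ep, fun h' => hne (h' ▸ ep)⟩

lemma not_reach_endpoints (hT : G.IsAcyclic) {x y : V} (h : G.Adj x y) :
    ¬ (G.deleteEdges {s(x,y)}).Reachable x y :=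
  ((isAcyclic_iff_forall_adj_isBridge.mp hT) h)

/-- Parity of crossings of an edge by a walk. -/
lemma even_count_iff (hG : G.Connected) (hT : G.IsAcyclic) {a b : V} (W : G.Walk a b)
    {x y : V} (hxy : G.Adj x y) :
    Even (W.edges.count s(x,y)) ↔ (G.deleteEdges {s(x,y)}).Reachable a b := by
  induction W with
  | nil => simpa using Reachable.refl _
  | @cons a c b h q ih =>
    rw [Walk.edges_cons]
    by_cases he : s(a, c) = s(x, y)
    · have hnac : ¬ (G.deleteEdges {s(x,y)}).Reachable a c := by
        rw [Sym2.eq_iff] at he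
        rcases he with ⟨rfl, rfl⟩ | ⟨rfl, rfl⟩
        · exact not_reach_endpoints hT hxy
        · exact fun hr => not_reach_endpoints hT hxy hr.symm
      have hb2 : (G.deleteEdges {s(x,y)}).Reachable b a ∨
          (G.deleteEdges {s(x,y)}).Reachable b c := by
        have h2 := he
        rw [Sym2.eq_iff] at h2
        rcases h2 with ⟨rfl, rfl⟩ | ⟨rfl, rfl⟩
        · exact reach_or hG a c b
        · exact (reach_or hG c a b).symm
      rw [he, List.count_cons_self, Nat.even_add_one, ih]
      constructor
      · intro hnot
        rcases hb2 with hr | hr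
        · exact hr.symm
        · exact absurd hr.symm hnot
      · intro hab hcb
        exact hnac (hab.trans hcb.symm)
    · have hadj : (G.deleteEdges {s(x,y)}).Adj a c := by
        simp only [deleteEdges_adj, Set.mem_singleton_iff]
        exact ⟨h, he⟩
      rw [List.count_cons_of_ne he, ih]
      exact ⟨fun hr => hadj.reachable.trans hr, fun hr => hadj.symm.reachable.trans hr⟩



noncomputable def pth (hG : G.Connected) (u a : V) : G.Path u a :=
  ((hG.preconnected u a).some).toPath

lemma eq_pth (hG : G.Connected) (hT : G.IsAcyclic) {u a : V} (p : G.Walk u a)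
    (hp : p.IsPath) : p = (pth hG u a : G.Walk u a) :=
  congrArg Subtype.val (hT.path_unique ⟨p, hp⟩ (pth hG u a))

lemma pth_prefix (hG : G.Connected) (hT : G.IsAcyclic) {u a t : V}
    (ht : t ∈ (pth hG u a : G.Walk u a).support) :
    ∀ e ∈ (pth hG u t : G.Walk u t).edges, e ∈ (pth hG u a : G.Walk u a).edges := by
  have h1 : ((pth hG u a : G.Walk u a).takeUntil t ht) = (pth hG u t : G.Walk u t) :=
    eq_pth hG hT _ ((pth hG u a).2.takeUntil ht)
  intro e he
  rw [← h1] at he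
  exact Walk.edges_takeUntil_subset _ ht he

lemma support_cover (hG : G.Connected) (hT : G.IsAcyclic) {u v a : V}
    (W : G.Walk u v) (ha : a ∈ W.support) :
    ∀ x ∈ (pth hG u a : G.Walk u a).support, x ∈ W.support := by
  intro x hx
  have h1 : ((W.takeUntil a ha).toPath : G.Walk u a) = (pth hG u a : G.Walk u a) :=
    eq_pth hG hT _ (W.takeUntil a ha).toPath.2
  rw [← h1] at hx
  exact Walk.support_takeUntil_subset W ha (Walk.support_toPath_subset _ hx)

lemma exists_first {Q : V → Prop} : ∀ {s u : V} (r : G.Walk s u), Q u →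
    ∃ (t : V) (rr : G.Walk s t), Q t ∧ (∀ e ∈ rr.edges, e ∈ r.edges) ∧
      (∀ x ∈ rr.support, x ∈ r.support) ∧ (∀ x ∈ rr.support, Q x → x = t) := by
  intro s u r
  induction r with
  | nil =>
    intro hQ
    exact ⟨_, Walk.nil, hQ, by simp, by simp, by simp⟩
  | @cons a c u h q ih =>
    intro hQ
    by_cases hQa : Q a
    · refine ⟨a, Walk.nil, hQa, by simp, by simp, by simp⟩
    · obtain ⟨t, rr, h1, h2, h2s, h3⟩ := ih hQ
      refine ⟨t, Walk.cons h rr, h1, ?_, ?_, ?_⟩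
      · intro e hee
        rw [Walk.edges_cons, List.mem_cons] at hee ⊢
        exact hee.imp id (h2 e)
      · intro x hx
        rw [Walk.support_cons, List.mem_cons] at hx ⊢
        exact hx.imp id (h2s x)
      · intro x hx hQx
        rw [Walk.support_cons, List.mem_cons] at hx
        rcases hx with rfl | hx
        · exact absurd hQx hQa
        · exact h3 x hx hQx

variable [Fintype V] [DecidableRel G.Adj]

noncomputable def DS (hG : G.Connected) (u : V) (S : Finset V) : Finset (Sym2 V) :=
  G.edgeFinset.filter (fun e => ∃ a ∈ S, e ∈ (pth hG u a : G.Walk u a).edges)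

lemma ub (hG : G.Connected) (hT : G.IsAcyclic) (w : Sym2 V → ℝ) (u v : V) :
    ∀ (n : ℕ) (S : Finset V), S.card ≤ n → u ∈ S → v ∈ S →
    ∃ W : G.Walk u v, (∀ x ∈ S, x ∈ W.support) ∧
      (W.edges.map w).sum =
        2 * (∑ e ∈ DS hG u S, w e) - ((pth hG u v : G.Walk u v).edges.map w).sum := by
  intro n
  induction n with
  | zero =>
    intro S hcard hu hv
    rw [Nat.le_zero, Finset.card_eq_zero] at hcard
    subst hcard; exact absurd hu (Finset.notMem_empty u)
  | succ n ih =>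
    intro S hcard hu hv
    by_cases hS : ∀ s ∈ S, s = u ∨ s = v
    · -- base case : S ⊆ {u, v}
      have hDS : DS hG u S = (pth hG u v : G.Walk u v).edges.toFinset := by
        ext e
        simp only [DS, Finset.mem_filter, mem_edgeFinset, List.mem_toFinset]
        constructor
        · rintro ⟨hE, a, ha, hea⟩
          rcases hS a ha with rfl | rfl
          · exact absurd hea (by simp [(pth hG a a).loop_eq])
          · exact hea
        · intro he
          exact ⟨(pth hG u v : G.Walk u v).edges_subset_edgeSet he, v, hv, he⟩
      refine ⟨(pth hG u v : G.Walk u v), ?_, ?_⟩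
      · intro x hx
        rcases hS x hx with rfl | rfl
        · exact Walk.start_mem_support _
        · exact Walk.end_mem_support _
      · rw [hDS, List.sum_toFinset _ ((pth hG u v).2.isTrail.edges_nodup)]
        ring
    · push_neg at hS
      obtain ⟨s, hs, hsu, hsv⟩ := hS
      set S' := S.erase s with hS'
      have hu' : u ∈ S' := Finset.mem_erase.mpr ⟨fun h => hsu h.symm, hu⟩
      have hv' : v ∈ S' := Finset.mem_erase.mpr ⟨fun h => hsv h.symm, hv⟩
      have hcard' : S'.card ≤ n := by
        have hce : S'.card = S.card - 1 := by rw [hS']; exact Finset.card_erase_of_mem hs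
        have h1 : 1 ≤ S.card := Finset.card_pos.mpr ⟨u, hu⟩
        omega
      obtain ⟨W', hW'sup, hW'len⟩ := ih S' hcard' hu' hv'
      -- the new branch from s to the old Steiner tree
      set Q : V → Prop := fun x => ∃ a ∈ S', x ∈ (pth hG u a : G.Walk u a).support with hQ
      set q : G.Walk u s := (pth hG u s : G.Walk u s) with hq
      have hQu : Q u := ⟨u, hu', Walk.start_mem_support _⟩
      obtain ⟨t, rr, hQt, hrre, hrrs, hrrmin⟩ := exists_first (Q := Q) q.reverse hQu
      set ρ : G.Walk s t := (rr.toPath : G.Walk s t) with hρ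
      have hρpath : ρ.IsPath := rr.toPath.2
      have hρe : ∀ e ∈ ρ.edges, e ∈ q.edges := by
        intro e he
        have := hrre e (Walk.edges_toPath_subset _ he)
        rwa [Walk.edges_reverse, List.mem_reverse] at this
      have hρmin : ∀ x ∈ ρ.support, Q x → x = t :=
        fun x hx => hrrmin x (Walk.support_toPath_subset _ hx)
      have ht_q : t ∈ q.support := by
        have := hrrs t (Walk.end_mem_support rr)
        rwa [Walk.support_reverse, List.mem_reverse] at this
      obtain ⟨a', ha', hta'⟩ := hQt
      have htW' : t ∈ W'.support :=
        support_cover hG hT W' (hW'sup a' ha') t hta'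
      -- splitting of q at t
      have hq1 : q.takeUntil t ht_q = (pth hG u t : G.Walk u t) :=
        eq_pth hG hT _ ((pth hG u s).2.takeUntil ht_q)
      have hρq2 : ρ = (q.dropUntil t ht_q).reverse :=
        (eq_pth hG hT ρ hρpath).trans
          (eq_pth hG hT _ ((pth hG u s).2.dropUntil ht_q).reverse).symm
      -- decomposition of the Steiner edge set
      have hdisj : Disjoint (DS hG u S') ρ.edges.toFinset := by
        rw [Finset.disjoint_right]
        intro e heρ heDS
        rw [List.mem_toFinset] at heρ
        simp only [DS, Finset.mem_filter, mem_edgeFinset] at heDS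
        obtain ⟨heE, a, ha, hea⟩ := heDS
        revert heρ heE hea
        induction e using Sym2.ind with
        | _ x y =>
          intro heρ heE hea
          have hx : x ∈ ρ.support := ρ.fst_mem_support_of_mem_edges heρ
          have hy : y ∈ ρ.support := ρ.snd_mem_support_of_mem_edges heρ
          have hQx : Q x := ⟨a, ha, (pth hG u a : G.Walk u a).fst_mem_support_of_mem_edges hea⟩
          have hQy : Q y := ⟨a, ha, (pth hG u a : G.Walk u a).snd_mem_support_of_mem_edges hea⟩
          have hxt := hρmin x hx hQx
          have hyt := hρmin y hy hQy
          exact (G.mem_edgeSet.mp heE).ne (hxt.trans hyt.symm)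
      have hsplit : DS hG u S = DS hG u S' ∪ ρ.edges.toFinset := by
        ext e
        simp only [Finset.mem_union, DS, Finset.mem_filter, mem_edgeFinset, List.mem_toFinset]
        constructor
        · rintro ⟨heE, a, ha, hea⟩
          by_cases has : a = s
          · subst has
            rw [show (pth hG u a : G.Walk u a) = q from rfl, ← Walk.take_spec q ht_q,
              Walk.edges_append, List.mem_append] at hea
            rcases hea with h1 | h2
            · rw [hq1] at h1
              exact Or.inl ⟨heE, a', ha', pth_prefix hG hT hta' e h1⟩
            · refine Or.inr ?_
              rw [hρq2, Walk.edges_reverse, List.mem_reverse]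
              exact h2
          · exact Or.inl ⟨heE, a, Finset.mem_erase.mpr ⟨has, ha⟩, hea⟩
        · rintro (⟨heE, a, ha, hea⟩ | he)
          · exact ⟨heE, a, Finset.mem_of_mem_erase ha, hea⟩
          · exact ⟨ρ.edges_subset_edgeSet he, s, hs, hρe e he⟩
      have hsum : ∑ e ∈ DS hG u S, w e
          = (∑ e ∈ DS hG u S', w e) + (ρ.edges.map w).sum := by
        rw [hsplit, Finset.sum_union hdisj, List.sum_toFinset _ hρpath.isTrail.edges_nodup]
      -- new walk
      set A := W'.takeUntil t htW' with hA
      set B := W'.dropUntil t htW' with hB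
      refine ⟨A.append (ρ.reverse.append (ρ.append B)), ?_, ?_⟩
      · intro x hx
        by_cases hxs : x = s
        · subst hxs
          have hxρ : x ∈ ρ.support := Walk.start_mem_support ρ
          simp only [Walk.mem_support_append_iff, Walk.support_reverse, List.mem_reverse]
          tauto
        · have hxS' : x ∈ S' := Finset.mem_erase.mpr ⟨hxs, hx⟩
          have hxW := hW'sup x hxS'
          rw [← Walk.take_spec W' htW', Walk.mem_support_append_iff] at hxW
          simp only [Walk.mem_support_append_iff]
          tauto
      · have hW'dec : (W'.edges.map w).sum = (A.edges.map w).sum + (B.edges.map w).sum := by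
          conv_lhs => rw [← Walk.take_spec W' htW']
          rw [Walk.edges_append, List.map_append, List.sum_append]
        simp only [Walk.edges_append, Walk.edges_reverse, List.map_append, List.sum_append,
          List.map_reverse, List.sum_reverse]
        rw [show (A.edges.map w).sum + ((ρ.edges.map w).sum + ((ρ.edges.map w).sum
            + (B.edges.map w).sum)) = ((A.edges.map w).sum + (B.edges.map w).sum)
            + 2 * (ρ.edges.map w).sum by ring, ← hW'dec, hW'len, hsum]
        ring


lemma reach_of_not_mem_edges {u v : V} (W : G.Walk u v) {e : Sym2 V}
    (hne : e ∉ W.edges) : (G.deleteEdges {e}).Reachable u v := by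
  refine ⟨W.transfer _ fun e' ep => ?_⟩
  simp only [deleteEdges, edgeSet_sdiff, edgeSet_fromEdgeSet,
    edgeSet_sdiff_sdiff_isDiag, Set.mem_diff, Set.mem_singleton_iff]
  exact ⟨W.edges_subset_edgeSet ep, fun h' => hne (h' ▸ ep)⟩

lemma even_count_iff' (hG : G.Connected) (hT : G.IsAcyclic) {a b : V} (W : G.Walk a b)
    {e : Sym2 V} (he : e ∈ G.edgeSet) :
    Even (W.edges.count e) ↔ (G.deleteEdges {e}).Reachable a b := by
  revert he
  induction e using Sym2.ind with
  | _ x y => exact fun he => even_count_iff hG hT W (G.mem_edgeSet.mp he)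

variable [Fintype V] [DecidableRel G.Adj]

lemma ds_eq (hG : G.Connected) (hT : G.IsAcyclic) (S : Finset V) (u : V) (hu : u ∈ S) :
    G.edgeFinset.filter (fun e =>
        ∃ a ∈ S, ∃ b ∈ S, ∀ Q : G.Walk a b, Q.IsPath → e ∈ Q.edges) = DS hG u S := by
  ext e
  simp only [DS, Finset.mem_filter, mem_edgeFinset, and_congr_right_iff]
  intro heE
  constructor
  · rintro ⟨a, ha, b, hb, hQ⟩
    have hab : e ∈ (pth hG a b : G.Walk a b).edges := hQ _ (pth hG a b).2
    by_contra hne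
    push_neg at hne
    have h1 : (G.deleteEdges {e}).Reachable u a := by
      by_contra h
      exact (hne a ha) ((mem_path_edges_iff hG hT _ (pth hG u a).2 heE).mpr h)
    have h2 : (G.deleteEdges {e}).Reachable u b := by
      by_contra h
      exact (hne b hb) ((mem_path_edges_iff hG hT _ (pth hG u b).2 heE).mpr h)
    exact (mem_path_edges_iff hG hT _ (pth hG a b).2 heE).mp hab (h1.symm.trans h2)
  · rintro ⟨a, ha, hea⟩
    refine ⟨u, hu, a, ha, fun Q hQp => ?_⟩
    rwa [eq_pth hG hT Q hQp]

lemma lb (hG : G.Connected) (hT : G.IsAcyclic) (w : Sym2 V → ℝ) (hw : ∀ e, 0 ≤ w e)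
    (S : Finset V) (u v : V) (hv : v ∈ S)
    (P : G.Walk u v) (hP : P.IsPath) (W : G.Walk u v) (hWs : ∀ x ∈ S, x ∈ W.support) :
    2 * (∑ e ∈ DS hG u S, w e) - (P.edges.map w).sum ≤ (W.edges.map w).sum := by
  have hPeq : P = (pth hG u v : G.Walk u v) := eq_pth hG hT P hP
  set m : Sym2 V → ℝ := fun e => if e ∈ P.edges then 1 else 2 with hm
  have keyA : ∀ e ∈ DS hG u S, e ∈ W.edges ∧ m e ≤ (W.edges.count e : ℝ) := by
    intro e he
    simp only [DS, Finset.mem_filter, mem_edgeFinset] at he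
    obtain ⟨heE, a, ha, hea⟩ := he
    have hmem : e ∈ W.edges := by
      by_contra hne
      have h1 : e ∉ (W.takeUntil a (hWs a ha)).edges :=
        fun hc => hne (Walk.edges_takeUntil_subset _ _ hc)
      exact (mem_path_edges_iff hG hT _ (pth hG u a).2 heE).mp hea
        (reach_of_not_mem_edges _ h1)
    refine ⟨hmem, ?_⟩
    have hc1 : 1 ≤ W.edges.count e := List.count_pos_iff.mpr hmem
    by_cases heP : e ∈ P.edges
    · simp only [hm, if_pos heP]
      exact_mod_cast hc1
    · have hre : (G.deleteEdges {e}).Reachable u v := by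
        by_contra h
        exact heP ((mem_path_edges_iff hG hT P hP heE).mpr h)
      have heven : Even (W.edges.count e) := (even_count_iff' hG hT W heE).mpr hre
      obtain ⟨k, hk⟩ := heven
      have hc2 : 2 ≤ W.edges.count e := by omega
      simp only [hm, if_neg heP]
      exact_mod_cast hc2
  have h0 : (W.edges.map w).sum = ∑ e ∈ W.edges.toFinset, (W.edges.count e : ℝ) * w e := by
    rw [Finset.sum_list_map_count]
    exact Finset.sum_congr rfl fun e _ => by rw [nsmul_eq_mul]
  have hsub : DS hG u S ⊆ W.edges.toFinset := fun e he =>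
    List.mem_toFinset.mpr (keyA e he).1
  have h1 : ∑ e ∈ DS hG u S, (W.edges.count e : ℝ) * w e
      ≤ ∑ e ∈ W.edges.toFinset, (W.edges.count e : ℝ) * w e :=
    Finset.sum_le_sum_of_subset_of_nonneg hsub fun e _ _ =>
      mul_nonneg (Nat.cast_nonneg _) (hw e)
  have h2 : ∑ e ∈ DS hG u S, m e * w e ≤ ∑ e ∈ DS hG u S, (W.edges.count e : ℝ) * w e :=
    Finset.sum_le_sum fun e he => mul_le_mul_of_nonneg_right (keyA e he).2 (hw e)
  have hfil : (DS hG u S).filter (fun e => e ∈ P.edges) = P.edges.toFinset := by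
    ext e
    simp only [Finset.mem_filter, List.mem_toFinset]
    constructor
    · exact fun h => h.2
    · intro he
      refine ⟨?_, he⟩
      simp only [DS, Finset.mem_filter, mem_edgeFinset]
      refine ⟨P.edges_subset_edgeSet he, v, hv, ?_⟩
      rwa [← hPeq]
  have h3 : ∑ e ∈ DS hG u S, m e * w e
      = 2 * (∑ e ∈ DS hG u S, w e) - (P.edges.map w).sum := by
    have hcong : ∀ e ∈ DS hG u S, m e * w e = 2 * w e - (if e ∈ P.edges then w e else 0) := by
      intro e _
      by_cases heP : e ∈ P.edges <;> simp [hm, heP] <;> ring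
    rw [Finset.sum_congr rfl hcong, Finset.sum_sub_distrib, ← Finset.sum_filter, hfil,
      List.sum_toFinset _ hP.isTrail.edges_nodup, Finset.mul_sum]
  rw [h0]
  rw [h3] at h2
  linarith

end Steiner7

open SimpleGraph Steiner7 in
/-- In a weighted tree with requests `S` and `u, v ∈ S`: the minimum length of a walk
from `u` to `v` visiting all nodes of `S` equals `2·W − d(u,v)`, where `W` is the total
edge weight of the minimal (Steiner) subtree spanning `S` (the union of the unique paths
between pairs of nodes of `S`) and `d(u,v)` is the length of the unique `u`–`v` path. -/
theorem stmt7 {V : Type*} [Fintype V] (G : SimpleGraph V) [DecidableRel G.Adj]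
    (hG : G.Connected) (hT : G.IsAcyclic)
    (w : Sym2 V → ℝ) (hw : ∀ e, 0 ≤ w e) (S : Finset V) (u v : V)
    (hu : u ∈ S) (hv : v ∈ S) (P : G.Walk u v) (hP : P.IsPath) :
    sInf {L : ℝ | ∃ W : G.Walk u v,
        (∀ x ∈ S, x ∈ W.support) ∧ L = (W.edges.map w).sum} =
      2 * (∑ e ∈ G.edgeFinset.filter (fun e =>
            ∃ a ∈ S, ∃ b ∈ S, ∀ Q : G.Walk a b, Q.IsPath → e ∈ Q.edges), w e)
        - (P.edges.map w).sum := by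
  have hPeq : P = (pth hG u v : G.Walk u v) := eq_pth hG hT P hP
  rw [ds_eq hG hT S u hu]
  apply IsLeast.csInf_eq
  constructor
  · obtain ⟨W, hWs, hWlen⟩ := ub hG hT w u v S.card S le_rfl hu hv
    refine ⟨W, hWs, ?_⟩
    rw [hWlen, hPeq]
  · rintro L ⟨W, hWs, rfl⟩
    exact lb hG hT w hw S u v hv P hP W hWs
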